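/- Let N ≥ 2 and let G be a subgroup of Equiv.Perm (Fin N) whose action on Fin N is transitive and which contains a transposition. Then there exists a natural number n ≥ 2 and a partition of Fin N into blocks, each block of cardinality exactly n, such that: (i) the partition is G-invariant, i.e. for every g ∈ G the image of each block under g is again a block; (ii) every permutation of Fin N whose support is contained in a single block belongs to G; and (iii) G acts transitively on the set of blocks. -/

import Mathlib

/-- A transitive subgroup of `Perm (Fin N)` (with `N ≥ 2`) containing a
transposition is a wreath product `𝔖ₙ ≀ K`: there is a `G`-invariant partition of
`Fin N` into blocks of some common size `n ≥ 2` such that every permutation supported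
in a single block lies in `G`, and `G` permutes the blocks transitively. -/
theorem stmt_1 (N : ℕ) (hN : 2 ≤ N) (G : Subgroup (Equiv.Perm (Fin N)))
    (htrans : ∀ x y : Fin N, ∃ g ∈ G, g x = y)
    (htransp : ∃ g ∈ G, Equiv.Perm.IsSwap g) :
    ∃ (n : ℕ), 2 ≤ n ∧ ∃ P : Set (Set (Fin N)),
      -- `P` is a partition of `Fin N`
      (∀ x : Fin N, ∃! b, b ∈ P ∧ x ∈ b) ∧
      -- each block has cardinality exactly `n`
      (∀ b ∈ P, b.ncard = n) ∧
      -- (i) the partition is `G`-invariant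
      (∀ g ∈ G, ∀ b ∈ P, (g : Equiv.Perm (Fin N)) '' b ∈ P) ∧
      -- (ii) every permutation supported in a single block belongs to `G`
      (∀ σ : Equiv.Perm (Fin N), (∃ b ∈ P, {x | σ x ≠ x} ⊆ b) → σ ∈ G) ∧
      -- (iii) `G` acts transitively on the blocks
      (∀ b ∈ P, ∀ b' ∈ P, ∃ g ∈ G, (g : Equiv.Perm (Fin N)) '' b = b') := by
  classical
  set r : Fin N → Fin N → Prop := fun x y => x = y ∨ Equiv.swap x y ∈ G with hrdef
  have hrefl : ∀ x, r x x := fun x => Or.inl rfl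
  have hsymm : ∀ {x y}, r x y → r y x := by
    rintro x y (h | h)
    · exact Or.inl h.symm
    · exact Or.inr (by rwa [Equiv.swap_comm])
  have hconj : ∀ g ∈ G, ∀ {x y : Fin N}, r x y → r (g x) (g y) := by
    rintro g hg x y (h | h)
    · exact Or.inl (congrArg g h)
    · right
      rw [Equiv.swap_apply_apply]
      exact G.mul_mem (G.mul_mem hg h) (G.inv_mem hg)
  have htrans' : ∀ {x y z}, r x y → r y z → r x z := by
    intro x y z hxy hyz
    rcases eq_or_ne x y with h | hxy'
    · exact h ▸ hyz
    rcases eq_or_ne y z with h | hyz'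
    · exact h ▸ hxy
    rcases eq_or_ne x z with h | hxz
    · exact Or.inl h
    have h1 : Equiv.swap x y ∈ G := hxy.resolve_left hxy'
    have h2 : Equiv.swap y z ∈ G := hyz.resolve_left hyz'
    right
    have key : Equiv.swap (Equiv.swap x y y) (Equiv.swap x y z)
        = Equiv.swap x y * Equiv.swap y z * (Equiv.swap x y)⁻¹ :=
      Equiv.swap_apply_apply _ y z
    rw [Equiv.swap_apply_right, Equiv.swap_apply_of_ne_of_ne (Ne.symm hxz) (Ne.symm hyz')]
      at key
    rw [key]
    exact G.mul_mem (G.mul_mem h1 h2) (G.inv_mem h1)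
  -- equivalence classes
  set cls : Fin N → Set (Fin N) := fun x => {y | r x y} with hclsdef
  have hmemcls : ∀ x, x ∈ cls x := fun x => hrefl x
  have hclseq : ∀ {x y}, r x y → cls x = cls y := by
    intro x y h
    ext z
    exact ⟨fun hz => htrans' (hsymm h) hz, fun hz => htrans' h hz⟩
  set P : Set (Set (Fin N)) := {b | ∃ x, b = cls x} with hPdef
  -- image of a class
  have himg : ∀ g ∈ G, ∀ x, (g : Equiv.Perm (Fin N)) '' cls x = cls (g x) := by
    intro g hg x
    ext y
    constructor
    · rintro ⟨z, hz, rfl⟩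
      exact hconj g hg hz
    · intro hy
      refine ⟨g⁻¹ y, ?_, by simp⟩
      have := hconj g⁻¹ (G.inv_mem hg) hy
      exact (by simpa using this : r x (g⁻¹ y))
  -- all classes have the same cardinality
  have hcard : ∀ x y : Fin N, (cls x).ncard = (cls y).ncard := by
    intro x y
    obtain ⟨g, hg, hgx⟩ := htrans x y
    rw [← hgx, ← himg g hg x]
    exact (Set.ncard_image_of_injective _ g.injective).symm
  -- get the transposition
  obtain ⟨a, b, hab, hhG⟩ : ∃ a b : Fin N, a ≠ b ∧ Equiv.swap a b ∈ G := by
    obtain ⟨h, hhG, a, b, hab, rfl⟩ := htransp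
    exact ⟨a, b, hab, hhG⟩
  refine ⟨(cls a).ncard, ?_, P, ?_, ?_, ?_, ?_, ?_⟩
  · -- 2 ≤ n
    have hsub : ({a, b} : Set (Fin N)) ⊆ cls a := by
      intro z hz
      simp only [Set.mem_insert_iff, Set.mem_singleton_iff] at hz
      rcases hz with rfl | rfl
      · exact hmemcls z
      · exact Or.inr hhG
    calc 2 = ({a, b} : Set (Fin N)).ncard := (Set.ncard_pair hab).symm
      _ ≤ (cls a).ncard := Set.ncard_le_ncard hsub (Set.toFinite _)
  · -- partition
    intro x
    refine ⟨cls x, ⟨⟨x, rfl⟩, hmemcls x⟩, ?_⟩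
    rintro b' ⟨⟨x', rfl⟩, hx⟩
    exact hclseq hx
  · -- cardinality
    rintro b ⟨x, rfl⟩
    exact hcard x a
  · -- invariance
    rintro g hg b ⟨x, rfl⟩
    exact ⟨g x, himg g hg x⟩
  · -- (ii)
    have key : ∀ k : ℕ, ∀ σ : Equiv.Perm (Fin N), σ.support.card ≤ k →
        ∀ x0, (↑σ.support : Set (Fin N)) ⊆ cls x0 → σ ∈ G := by
      intro k
      induction k with
      | zero =>
        intro σ hσ x0 _
        have : σ.support = ∅ := Finset.card_eq_zero.mp (Nat.le_zero.mp hσ)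
        rw [Equiv.Perm.support_eq_empty_iff] at this
        rw [this]; exact G.one_mem
      | succ k ih =>
        intro σ hσ x0 hsub
        rcases eq_or_ne σ 1 with rfl | hσ1
        · exact G.one_mem
        obtain ⟨c, hc⟩ : ∃ c, σ c ≠ c := by
          by_contra hall
          push_neg at hall
          exact hσ1 (Equiv.ext hall)
        have hcsupp : c ∈ σ.support := Equiv.Perm.mem_support.mpr hc
        have hσc : σ c ∈ σ.support := Equiv.Perm.apply_mem_support.mpr hcsupp
        have h1 : r x0 c := hsub hcsupp
        have h2 : r x0 (σ c) := hsub hσc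
        have hr : r c (σ c) := htrans' (hsymm h1) h2
        have hswap : Equiv.swap c (σ c) ∈ G := hr.resolve_left (Ne.symm hc)
        set τ := Equiv.swap c (σ c) * σ with hτ
        have hcard' : τ.support.card < σ.support.card :=
          Equiv.Perm.card_support_swap_mul hc
        have hsub' : (↑τ.support : Set (Fin N)) ⊆ cls x0 := by
          intro z hz
          have hz' : z ∈ τ.support := hz
          have : z ∈ (Equiv.swap c (σ c)).support ⊔ σ.support :=
            Equiv.Perm.support_mul_le _ _ hz'
          rw [Equiv.Perm.support_swap (Ne.symm hc)] at this
          rcases Finset.mem_union.mp this with h | h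
          · rcases Finset.mem_insert.mp h with rfl | h
            · exact h1
            · rw [Finset.mem_singleton.mp h]; exact h2
          · exact hsub h
        have hτG : τ ∈ G := ih τ (Nat.lt_succ_iff.mp (lt_of_lt_of_le hcard' hσ)) x0 hsub'
        have : σ = Equiv.swap c (σ c) * τ := by
          rw [hτ, ← mul_assoc, Equiv.swap_mul_self, one_mul]
        rw [this]
        exact G.mul_mem hswap hτG
    rintro σ ⟨b', ⟨x, rfl⟩, hsub⟩
    refine key σ.support.card σ le_rfl x ?_
    intro z hz
    exact hsub (Equiv.Perm.mem_support.mp hz)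
  · -- (iii)
    rintro b ⟨x, rfl⟩ b' ⟨y, rfl⟩
    obtain ⟨g, hg, hgx⟩ := htrans x y
    exact ⟨g, hg, by rw [himg g hg x, hgx]⟩
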